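/- Let f : ℝᴰ → ℝ be twice differentiable and nonnegative, with ‖∇²f(θ)‖_{p→q} ≤ H₁·f(θ) for all θ (H₁ > 0, 1/p + 1/q = 1). Then for all x, y: f(y) ≤ f(x)·exp(√H₁·‖y − x‖_p). -/

import Mathlib

open scoped BigOperators


noncomputable def lpNorm (p : ENNReal) {ι : Type*} [Fintype ι] (x : ι → ℝ) : ℝ :=
  ‖(WithLp.equiv p (ι → ℝ)).symm x‖

noncomputable def opNorm (p q : ENNReal) {ι κ : Type*} [Fintype ι] [Fintype κ]
    (A : Matrix ι κ ℝ) : ℝ :=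
  sSup {c | ∃ x : κ → ℝ, lpNorm p x ≤ 1 ∧ c = lpNorm q (A.mulVec x)}

noncomputable def dotCLM {n : ℕ} (v : Fin n → ℝ) : (Fin n → ℝ) →L[ℝ] ℝ :=
  LinearMap.toContinuousLinearMap (∑ i, v i • (LinearMap.proj i : (Fin n → ℝ) →ₗ[ℝ] ℝ))

noncomputable def mulVecCLM {m n : ℕ} (M : Matrix (Fin m) (Fin n) ℝ) :
    (Fin n → ℝ) →L[ℝ] (Fin m → ℝ) :=
  LinearMap.toContinuousLinearMap M.mulVecLin

lemma dotCLM_apply {n : ℕ} (v w : Fin n → ℝ) : dotCLM v w = ∑ i, v i * w i := by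
  simp [dotCLM, LinearMap.coe_toContinuousLinearMap', LinearMap.sum_apply, smul_eq_mul]

lemma dotCLM_comm {n : ℕ} (v w : Fin n → ℝ) : dotCLM v w = dotCLM w v := by
  simp [dotCLM_apply, mul_comm]

lemma mulVecCLM_apply {m n : ℕ} (M : Matrix (Fin m) (Fin n) ℝ) (x : Fin n → ℝ) :
    mulVecCLM M x = M.mulVec x := by
  simp [mulVecCLM, LinearMap.coe_toContinuousLinearMap']

lemma lpNorm_nonneg {p : ENNReal} (hp : 1 ≤ p) {ι : Type*} [Fintype ι] (x : ι → ℝ) :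
    0 ≤ lpNorm p x := by
  haveI : Fact (1 ≤ p) := ⟨hp⟩
  exact norm_nonneg _

lemma lpNorm_eq_zero {p : ENNReal} (hp : 1 ≤ p) {ι : Type*} [Fintype ι] {x : ι → ℝ}
    (h : lpNorm p x = 0) : x = 0 := by
  haveI : Fact (1 ≤ p) := ⟨hp⟩
  have := norm_eq_zero.mp h
  have := congrArg (WithLp.equiv p (ι → ℝ)) this
  simpa using this

lemma lpNorm_smul {p : ENNReal} (hp : 1 ≤ p) {ι : Type*} [Fintype ι] (c : ℝ) (x : ι → ℝ) :
    lpNorm p (c • x) = |c| * lpNorm p x := by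
  haveI : Fact (1 ≤ p) := ⟨hp⟩
  unfold lpNorm
  rw [WithLp.equiv_symm_apply, WithLp.toLp_smul, norm_smul, Real.norm_eq_abs]

lemma lpNorm_neg {p : ENNReal} (hp : 1 ≤ p) {ι : Type*} [Fintype ι] (x : ι → ℝ) :
    lpNorm p (-x) = lpNorm p x := by
  haveI : Fact (1 ≤ p) := ⟨hp⟩
  unfold lpNorm
  rw [WithLp.equiv_symm_apply, WithLp.toLp_neg, norm_neg]

lemma lpNorm_eq_sum {p : ENNReal} (hp : 1 ≤ p) (hptop : p ≠ ⊤) {ι : Type*} [Fintype ι]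
    (x : ι → ℝ) : lpNorm p x = (∑ i, |x i| ^ p.toReal) ^ (1 / p.toReal) := by
  haveI : Fact (1 ≤ p) := ⟨hp⟩
  have hpos : 0 < p.toReal := ENNReal.toReal_pos (by positivity) hptop
  unfold lpNorm
  rw [PiLp.norm_eq_sum hpos]
  simp [Real.norm_eq_abs, WithLp.equiv_symm_apply, PiLp.toLp_apply]

lemma lpNorm_top {ι : Type*} [Fintype ι] (x : ι → ℝ) :
    lpNorm ⊤ x = ⨆ i, |x i| := by
  unfold lpNorm
  rw [PiLp.norm_eq_ciSup]
  simp [Real.norm_eq_abs, WithLp.equiv_symm_apply, PiLp.toLp_apply]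

lemma lpNorm_one {ι : Type*} [Fintype ι] (x : ι → ℝ) :
    lpNorm 1 x = ∑ i, |x i| := by
  rw [lpNorm_eq_sum le_rfl (by simp)]
  simp

lemma holder {ι : Type*} [Fintype ι] {p q : ENNReal} (hp : 1 ≤ p) (hq : 1 ≤ q)
    (hpq : 1/p + 1/q = 1) (u w : ι → ℝ) :
    ∑ i, u i * w i ≤ lpNorm p u * lpNorm q w := by
  have habs : ∑ i, u i * w i ≤ ∑ i, |u i| * |w i| := by
    apply Finset.sum_le_sum
    intro i _
    rw [← abs_mul]
    exact le_abs_self _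
  rcases eq_or_ne p ⊤ with hptop | hptop
  · -- q = 1
    have hq1 : q = 1 := by
      rw [hptop] at hpq
      simp at hpq
      simpa using hpq
    subst hq1 hptop
    rw [lpNorm_top, lpNorm_one]
    refine le_trans habs ?_
    rw [Finset.mul_sum]
    apply Finset.sum_le_sum
    intro i _
    exact mul_le_mul_of_nonneg_right
      (le_ciSup (f := fun j => |u j|) (Set.Finite.bddAbove (Set.finite_range _)) i)
      (abs_nonneg _)
  rcases eq_or_ne q ⊤ with hqtop | hqtop
  · have hp1 : p = 1 := by
      rw [hqtop] at hpq
      simp at hpq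
      simpa using hpq
    subst hp1 hqtop
    rw [lpNorm_top, lpNorm_one]
    refine le_trans habs ?_
    rw [Finset.sum_mul]
    apply Finset.sum_le_sum
    intro i _
    exact mul_le_mul_of_nonneg_left
      (le_ciSup (f := fun j => |w j|) (Set.Finite.bddAbove (Set.finite_range _)) i)
      (abs_nonneg _)
  · -- both finite
    have hp0 : p ≠ 0 := by positivity
    have hq0 : q ≠ 0 := by positivity
    have hp1 : p ≠ 1 := by
      rintro rfl
      simp at hpq
      have h0 : q⁻¹ = 0 := by
        by_contra hne
        have : (0:ENNReal) < q⁻¹ := pos_iff_ne_zero.mpr hne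
        have hlt : (1:ENNReal) < 1 + q⁻¹ := ENNReal.lt_add_right (by simp) hne
        rw [hpq] at hlt
        simp at hlt
      exact hqtop (ENNReal.inv_eq_zero.mp h0)
    have hlt : 1 < p.toReal := by
      rw [show (1:ℝ) = (1:ENNReal).toReal by simp]
      exact (ENNReal.toReal_lt_toReal (by simp) hptop).mpr (lt_of_le_of_ne hp (Ne.symm hp1))
    have hsum : p.toReal⁻¹ + q.toReal⁻¹ = 1 := by
      have := congrArg ENNReal.toReal hpq
      rw [ENNReal.toReal_add (by simp [ENNReal.div_eq_top, hp0, hptop])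
        (by simp [ENNReal.div_eq_top, hq0, hqtop])] at this
      simpa [one_div, ENNReal.toReal_inv] using this
    have hconj : Real.HolderConjugate p.toReal q.toReal := Real.holderConjugate_iff.mpr ⟨hlt, hsum⟩
    have := Real.inner_le_Lp_mul_Lq Finset.univ u w hconj
    rwa [lpNorm_eq_sum hp hptop, lpNorm_eq_sum hq hqtop]

lemma lpNorm_zero {p : ENNReal} (hp : 1 ≤ p) {ι : Type*} [Fintype ι] :
    lpNorm p (0 : ι → ℝ) = 0 := by
  haveI : Fact (1 ≤ p) := ⟨hp⟩
  unfold lpNorm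
  rw [show ((WithLp.equiv p (ι → ℝ)).symm 0) = 0 from rfl, norm_zero]

lemma lpNorm_mulVec_le {D : ℕ} (p q : ENNReal) (hp : 1 ≤ p) (hq : 1 ≤ q)
    (A : Matrix (Fin D) (Fin D) ℝ) (u : Fin D → ℝ) :
    lpNorm q (A.mulVec u) ≤ opNorm p q A * lpNorm p u := by
  haveI : Fact (1 ≤ p) := ⟨hp⟩
  haveI : Fact (1 ≤ q) := ⟨hq⟩
  set L : PiLp p (fun _ : Fin D => ℝ) →ₗ[ℝ] PiLp q (fun _ : Fin D => ℝ) :=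
    (WithLp.linearEquiv q ℝ ((Fin D) → ℝ)).symm.toLinearMap ∘ₗ A.mulVecLin ∘ₗ
      (WithLp.linearEquiv p ℝ ((Fin D) → ℝ)).toLinearMap with hL
  set T := LinearMap.toContinuousLinearMap L with hT
  have hTapp : ∀ x : Fin D → ℝ,
      T ((WithLp.equiv p ((Fin D) → ℝ)).symm x) =
        (WithLp.equiv q ((Fin D) → ℝ)).symm (A.mulVec x) := fun x => rfl
  have hTle : ∀ x : Fin D → ℝ, lpNorm q (A.mulVec x) ≤ ‖T‖ * lpNorm p x := by
    intro x
    have := T.le_opNorm ((WithLp.equiv p ((Fin D) → ℝ)).symm x)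
    rw [hTapp x] at this
    exact this
  have hbdd : BddAbove {c | ∃ x : Fin D → ℝ, lpNorm p x ≤ 1 ∧ c = lpNorm q (A.mulVec x)} := by
    refine ⟨‖T‖, ?_⟩
    rintro c ⟨x, hx, rfl⟩
    calc lpNorm q (A.mulVec x) ≤ ‖T‖ * lpNorm p x := hTle x
      _ ≤ ‖T‖ * 1 := mul_le_mul_of_nonneg_left hx (norm_nonneg _)
      _ = ‖T‖ := mul_one _
  set d := lpNorm p u with hd
  rcases eq_or_lt_of_le (lpNorm_nonneg hp u) with h0 | h0
  · have hu : u = 0 := lpNorm_eq_zero hp h0.symm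
    rw [hu, Matrix.mulVec_zero, lpNorm_zero hq, hd, ← h0, mul_zero]
  · have hmem : lpNorm q (A.mulVec (d⁻¹ • u)) ∈
        {c | ∃ x : Fin D → ℝ, lpNorm p x ≤ 1 ∧ c = lpNorm q (A.mulVec x)} := by
      refine ⟨d⁻¹ • u, ?_, rfl⟩
      rw [lpNorm_smul hp, abs_of_nonneg (by positivity), ← hd, inv_mul_cancel₀ (ne_of_gt h0)]
    have hle : lpNorm q (A.mulVec (d⁻¹ • u)) ≤ opNorm p q A := le_csSup hbdd hmem
    rw [Matrix.mulVec_smul, lpNorm_smul hq, abs_of_nonneg (by positivity)] at hle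
    calc lpNorm q (A.mulVec u) = d⁻¹ * lpNorm q (A.mulVec u) * d := by
          have hd0 : d ≠ 0 := ne_of_gt h0; field_simp
      _ ≤ opNorm p q A * d := mul_le_mul_of_nonneg_right hle h0.le

open Real

lemma odeA (h h1 h2 : ℝ → ℝ) (c : ℝ) (hc : 0 < c)
    (hd1 : ∀ t, HasDerivAt h (h1 t) t) (hd2 : ∀ t, HasDerivAt h1 (h2 t) t)
    (hnn : ∀ t, 0 ≤ h t) (hb : ∀ t, |h2 t| ≤ c ^ 2 * h t) :
    ∀ t, h1 t ≤ c * h t := by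
  by_contra hcon
  push_neg at hcon
  obtain ⟨t₀, ht₀⟩ := hcon
  -- F t = exp (c*t) * (c * h t - h1 t) is monotone
  set F : ℝ → ℝ := fun t => Real.exp (c * t) * (c * h t - h1 t) with hF
  have hFd : ∀ t, HasDerivAt F (Real.exp (c * t) * (c ^ 2 * h t - h2 t)) t := by
    intro t
    have e1 : HasDerivAt (fun t => Real.exp (c * t)) (c * Real.exp (c * t)) t := by
      simpa [mul_comm, Function.comp_def] using (Real.hasDerivAt_exp (c * t)).comp t
        ((hasDerivAt_id t).const_mul c)
    have e2 : HasDerivAt (fun t => c * h t - h1 t) (c * h1 t - h2 t) t :=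
      ((hd1 t).const_mul c).sub (hd2 t)
    have := e1.mul e2
    exact this.congr_deriv (by ring)
  have hFmono : Monotone F := by
    have hdiff : Differentiable ℝ F := fun t => (hFd t).differentiableAt
    refine monotone_of_deriv_nonneg hdiff ?_
    intro t
    rw [(hFd t).deriv]
    have : h2 t ≤ c ^ 2 * h t := (abs_le.mp (hb t)).2
    have := sub_nonneg.mpr this
    positivity
  set K : ℝ := Real.exp (c * t₀) * (h1 t₀ - c * h t₀) with hK
  have hKpos : 0 < K := mul_pos (Real.exp_pos _) (sub_pos.mpr ht₀)
  have hFt₀ : F t₀ = -K := by simp [hF, hK]; ring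
  have hstep : ∀ t ≤ t₀, K * Real.exp (-(c * t)) ≤ h1 t := by
    intro t ht
    have h1le : Real.exp (c * t) * (c * h t - h1 t) ≤ -K := hFt₀ ▸ hFmono ht
    have e : Real.exp (c * t) * Real.exp (-(c * t)) = 1 := by
      rw [← Real.exp_add]; simp
    have h3 : c * h t - h1 t ≤ -K * Real.exp (-(c * t)) := by
      have h4 := mul_le_mul_of_nonneg_right h1le (Real.exp_pos (-(c * t))).le
      rw [mul_comm (Real.exp (c * t)) _, mul_assoc, e, mul_one] at h4
      exact h4
    have hch : 0 ≤ c * h t := mul_nonneg hc.le (hnn t)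
    linarith
  -- G t = h t + (K/c) * exp (-(c*t)) monotone on Iic t₀
  set G : ℝ → ℝ := fun t => h t + K / c * Real.exp (-(c * t)) with hG
  have hGd : ∀ t, HasDerivAt G (h1 t - K * Real.exp (-(c * t))) t := by
    intro t
    have e1 : HasDerivAt (fun t => Real.exp (-(c * t))) (-c * Real.exp (-(c * t))) t := by
      simpa [mul_comm, Function.comp_def] using (Real.hasDerivAt_exp (-(c * t))).comp t
        (((hasDerivAt_id t).const_mul c).neg)
    have := (hd1 t).add (e1.const_mul (K / c))
    exact this.congr_deriv (by field_simp; ring)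
  have hGmono : MonotoneOn G (Set.Iic t₀) := by
    refine monotoneOn_of_deriv_nonneg (convex_Iic t₀)
      ((Differentiable.continuous (fun t : ℝ => (hGd t).differentiableAt)).continuousOn) ?_ ?_
    · intro t ht
      exact ((hGd t).differentiableAt).differentiableWithinAt
    · intro t ht
      rw [(hGd t).deriv]
      rw [interior_Iic] at ht
      have := hstep t (le_of_lt ht)
      linarith
  -- contradiction by taking t very negative
  have hGle : ∀ t ≤ t₀, K / c * Real.exp (-(c * t)) ≤ G t₀ := by
    intro t ht
    have := hGmono (Set.mem_Iic.mpr ht) (Set.mem_Iic.mpr le_rfl) ht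
    have hh := hnn t
    simp only [hG] at this ⊢
    linarith
  set M : ℝ := c * (|G t₀| + 1) / K with hM
  have hMpos : 0 < M := by positivity
  set t₁ : ℝ := -(Real.log M) / c with ht₁
  set t₂ : ℝ := min t₀ t₁ with ht₂
  have hexp1 : Real.exp (-(c * t₁)) = M := by
    rw [ht₁]; rw [show -(c * (-(Real.log M) / c)) = Real.log M by field_simp]
    exact Real.exp_log hMpos
  have hexp2 : M ≤ Real.exp (-(c * t₂)) := by
    rw [← hexp1]
    apply Real.exp_le_exp.mpr
    have : t₂ ≤ t₁ := min_le_right _ _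
    nlinarith
  have hfinal := hGle t₂ (min_le_left _ _)
  have : K / c * M ≤ G t₀ := le_trans (by
    apply mul_le_mul_of_nonneg_left hexp2 (by positivity)) hfinal
  have hKM : K / c * M = |G t₀| + 1 := by
    rw [hM]; field_simp
  rw [hKM] at this
  linarith [le_abs_self (G t₀)]

theorem odeMain (h h1 h2 : ℝ → ℝ) (c : ℝ) (hc : 0 < c)
    (hd1 : ∀ t, HasDerivAt h (h1 t) t) (hd2 : ∀ t, HasDerivAt h1 (h2 t) t)
    (hnn : ∀ t, 0 ≤ h t) (hb : ∀ t, |h2 t| ≤ c ^ 2 * h t) :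
    h 1 ≤ h 0 * Real.exp c := by
  have key := odeA h h1 h2 c hc hd1 hd2 hnn hb
  set φ : ℝ → ℝ := fun t => h t * Real.exp (-(c * t)) with hφ
  have hφd : ∀ t, HasDerivAt φ ((h1 t - c * h t) * Real.exp (-(c * t))) t := by
    intro t
    have e1 : HasDerivAt (fun t => Real.exp (-(c * t))) (-c * Real.exp (-(c * t))) t := by
      simpa [mul_comm, Function.comp_def] using (Real.hasDerivAt_exp (-(c * t))).comp t
        (((hasDerivAt_id t).const_mul c).neg)
    have := (hd1 t).mul e1
    exact this.congr_deriv (by ring)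
  have hanti : Antitone φ := by
    refine antitone_of_deriv_nonpos (fun t => (hφd t).differentiableAt) ?_
    intro t
    rw [(hφd t).deriv]
    have := key t
    have : h1 t - c * h t ≤ 0 := by linarith
    have he : 0 < Real.exp (-(c * t)) := Real.exp_pos _
    exact mul_nonpos_of_nonpos_of_nonneg this he.le
  have := hanti (by norm_num : (0:ℝ) ≤ 1)
  simp only [hφ] at this
  have he : Real.exp (-(c * 1)) = (Real.exp c)⁻¹ := by
    rw [← Real.exp_neg]; ring_nf
  rw [mul_zero, neg_zero, Real.exp_zero, mul_one, mul_one] at this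
  calc h 1 = h 1 * Real.exp (-c) * Real.exp c := by
        rw [mul_assoc, ← Real.exp_add]; simp
    _ ≤ h 0 * Real.exp c := by
        apply mul_le_mul_of_nonneg_right this (Real.exp_pos c).le

theorem stmt2 {D : ℕ} (p q : ENNReal) (hp : 1 ≤ p) (hq : 1 ≤ q) (hpq : 1/p + 1/q = 1)
    (f : (Fin D → ℝ) → ℝ) (g : (Fin D → ℝ) → (Fin D → ℝ))
    (Hess : (Fin D → ℝ) → Matrix (Fin D) (Fin D) ℝ)
    (hfnn : ∀ θ, 0 ≤ f θ)
    (hgrad : ∀ θ, HasFDerivAt f (dotCLM (g θ)) θ)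
    (hhess : ∀ θ, HasFDerivAt g (mulVecCLM (Hess θ)) θ)
    (H1 : ℝ) (hH1 : 0 < H1)
    (hnus : ∀ θ, opNorm p q (Hess θ) ≤ H1 * f θ) :
    ∀ x y, f y ≤ f x * Real.exp (Real.sqrt H1 * lpNorm p (y - x)) := by
  intro x y
  set u : Fin D → ℝ := y - x with hu
  set d : ℝ := lpNorm p u with hd
  rcases eq_or_lt_of_le (lpNorm_nonneg hp u) with h0 | h0
  · have hu0 : u = 0 := lpNorm_eq_zero hp h0.symm
    have hyx : y = x := by rwa [hu, sub_eq_zero] at hu0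
    have hd0 : d = 0 := by rw [hd, ← h0]
    rw [hyx, hd0, mul_zero, Real.exp_zero, mul_one]
  · set c : ℝ := Real.sqrt H1 * d with hc
    have hcpos : 0 < c := mul_pos (Real.sqrt_pos.mpr hH1) h0
    set γ : ℝ → (Fin D → ℝ) := fun s => x + s • u with hγdef
    have hγ : ∀ t, HasDerivAt γ u t := by
      intro t
      simpa [hγdef] using ((hasDerivAt_id t).smul_const u).const_add x
    set h : ℝ → ℝ := fun t => f (γ t) with hhdef
    set h1 : ℝ → ℝ := fun t => dotCLM u (g (γ t)) with hh1def
    set h2 : ℝ → ℝ := fun t => dotCLM u ((Hess (γ t)).mulVec u) with hh2def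
    have hh1 : ∀ t, HasDerivAt h (h1 t) t := by
      intro t
      have hcomp := (hgrad (γ t)).comp_hasDerivAt t (hγ t)
      show HasDerivAt h (dotCLM u (g (γ t))) t
      rw [dotCLM_comm]
      exact hcomp
    have hh2 : ∀ t, HasDerivAt h1 (h2 t) t := by
      intro t
      have hg' := (hhess (γ t)).comp_hasDerivAt t (hγ t)
      have hcomp := ((dotCLM u).hasFDerivAt).comp_hasDerivAt t hg'
      rw [mulVecCLM_apply] at hcomp
      show HasDerivAt h1 (dotCLM u ((Hess (γ t)).mulVec u)) t
      exact hcomp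
    have hnn : ∀ t, 0 ≤ h t := fun t => hfnn _
    have hb : ∀ t, |h2 t| ≤ c ^ 2 * h t := by
      intro t
      set w : Fin D → ℝ := (Hess (γ t)).mulVec u with hw
      have hub : ∑ i, u i * w i ≤ d * lpNorm q w := by
        rw [hd]; exact holder hp hq hpq u w
      have hlb : -(∑ i, u i * w i) ≤ d * lpNorm q w := by
        have := holder hp hq hpq u (-w)
        rw [lpNorm_neg hq] at this
        rw [hd]
        refine le_trans (le_of_eq ?_) this
        rw [← Finset.sum_neg_distrib]
        exact Finset.sum_congr rfl fun i _ => by simp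
      have habs : |h2 t| ≤ d * lpNorm q w := by
        rw [hh2def]
        simp only [dotCLM_apply]
        exact abs_le.mpr ⟨by linarith, hub⟩
      have hwle : lpNorm q w ≤ H1 * h t * d := by
        calc lpNorm q w ≤ opNorm p q (Hess (γ t)) * d := by
              rw [hw, hd]; exact lpNorm_mulVec_le p q hp hq _ u
          _ ≤ H1 * h t * d := mul_le_mul_of_nonneg_right (hnus (γ t)) h0.le
      have hc2 : c ^ 2 = H1 * d ^ 2 := by
        rw [hc, mul_pow, Real.sq_sqrt hH1.le]
      calc |h2 t| ≤ d * (H1 * h t * d) := le_trans habs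
            (mul_le_mul_of_nonneg_left hwle h0.le)
        _ = c ^ 2 * h t := by rw [hc2]; ring
    have hmain := odeMain h h1 h2 c hcpos hh1 hh2 hnn hb
    have eγ1 : γ 1 = y := by
      rw [hγdef]
      simp only [one_smul, hu]
      abel
    have eγ0 : γ 0 = x := by
      rw [hγdef]; simp
    have e1 : h 1 = f y := by
      show f (γ 1) = f y
      rw [eγ1]
    have e0 : h 0 = f x := by
      show f (γ 0) = f x
      rw [eγ0]
    rw [e1, e0] at hmain
    exact hmain
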